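/- Let 𝒞 be an abelian category and k, y, b objects such that Hom(k,y), Hom(y,b), Hom(b,k) and Hom(y,y) are finite sets. Let V(k,y,b) be the set of pairs (i,p) where i : k → y is a monomorphism, p : y → b is an epimorphism, and ker p = im i (i.e. 0 → k → y → b → 0 is a short exact sequence). The group Aut(y) acts on V(k,y,b) by φ·(i,p) := (φ∘i, p∘φ^{-1}). Then the number of Aut(y)-orbits on V(k,y,b) equals |V(k,y,b)| · |Hom(b,k)| / |Aut(y)| in ℚ. -/

import Mathlib

open CategoryTheory Limits MulAction

namespace Statement9Aux

lemma counting {G X : Type*} [Group G] [MulAction G X] [Finite G] [Finite X]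
    (n : ℕ) (hn : ∀ x : X, Nat.card (MulAction.stabilizer G x) = n) :
    (Nat.card X) * n = Nat.card (Quotient (MulAction.orbitRel G X)) * Nat.card G := by
  classical
  cases nonempty_fintype G
  cases nonempty_fintype X
  have e := selfEquivSigmaOrbitsQuotientStabilizer G X
  rw [Nat.card_congr e]
  have key : ∀ ω : Quotient (orbitRel G X),
      Nat.card (G ⧸ stabilizer G ω.out) * n = Nat.card G := by
    intro ω
    rw [← hn ω.out]
    exact (Subgroup.card_eq_card_quotient_mul_card_subgroup _).symm
  cases nonempty_fintype (Quotient (orbitRel G X))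
  simp only [Nat.card_eq_fintype_card, Fintype.card_sigma, Finset.sum_mul]
  rw [Finset.sum_congr rfl (fun ω _ => ?_), Finset.sum_const, Finset.card_univ, smul_eq_mul]
  have := key ω
  simpa [Nat.card_eq_fintype_card] using this


variable {C : Type*} [Category C] [Abelian C] {k y b : C}

abbrev Vset (k y b : C) : Set ((k ⟶ y) × (y ⟶ b)) :=
  {ip | Mono ip.1 ∧ Epi ip.2 ∧ ∃ w : ip.1 ≫ ip.2 = 0, (ShortComplex.mk ip.1 ip.2 w).Exact}

lemma smul_mem_Vset {ip : (k ⟶ y) × (y ⟶ b)} (h : ip ∈ Vset k y b) (φ : Aut y) :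
    (ip.1 ≫ φ.hom, φ.inv ≫ ip.2) ∈ Vset k y b := by
  obtain ⟨h1, h2, w, hex⟩ := h
  have w' : (ip.1 ≫ φ.hom) ≫ (φ.inv ≫ ip.2) = 0 := by
    rw [Category.assoc, φ.hom_inv_id_assoc, w]
  haveI : Mono φ.hom := mono_of_mono_fac φ.hom_inv_id
  haveI : Epi φ.inv := epi_of_epi_fac φ.hom_inv_id
  refine ⟨mono_comp _ _, epi_comp _ _, w', ?_⟩
  have e : ShortComplex.mk ip.1 ip.2 w ≅ ShortComplex.mk (ip.1 ≫ φ.hom) (φ.inv ≫ ip.2) w' :=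
    ShortComplex.isoMk (Iso.refl _) φ (Iso.refl _) (by simp) (by simp; exact φ.hom_inv_id_assoc _)
  exact ShortComplex.exact_of_iso e hex

instance : MulAction (Aut y) (Vset k y b) where
  smul φ v := ⟨(v.1.1 ≫ φ.hom, φ.inv ≫ v.1.2), smul_mem_Vset v.2 φ⟩
  one_smul v := Subtype.ext (Prod.ext
    (show v.1.1 ≫ 𝟙 y = v.1.1 from Category.comp_id _)
    (show 𝟙 y ≫ v.1.2 = v.1.2 from Category.id_comp _))
  mul_smul φ ψ v := Subtype.ext (Prod.ext
    (show v.1.1 ≫ ψ.hom ≫ φ.hom = (v.1.1 ≫ ψ.hom) ≫ φ.hom from (Category.assoc _ _ _).symm)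
    (show (φ.inv ≫ ψ.inv) ≫ v.1.2 = φ.inv ≫ ψ.inv ≫ v.1.2 from Category.assoc _ _ _))

lemma smul_coe (φ : Aut y) (v : Vset k y b) :
    ((φ • v : Vset k y b) : (k ⟶ y) × (y ⟶ b)) = (v.1.1 ≫ φ.hom, φ.inv ≫ v.1.2) := rfl

lemma card_stabilizer (v : Vset k y b) :
    Nat.card (stabilizer (Aut y) v) = Nat.card (b ⟶ k) := by
  obtain ⟨⟨i, p⟩, h1, h2, w, hex⟩ := v
  have ha : ∀ f : b ⟶ k, (p ≫ f ≫ i) ≫ p ≫ f ≫ i = 0 := by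
    intro f
    simp only [Category.assoc]
    rw [reassoc_of% w]
    simp
  have hinv1 : ∀ f : b ⟶ k, (𝟙 y + p ≫ f ≫ i) ≫ (𝟙 y - p ≫ f ≫ i) = 𝟙 y := by
    intro f
    simp only [Preadditive.comp_add, Preadditive.comp_sub, Preadditive.add_comp, Preadditive.sub_comp, Category.comp_id, Category.id_comp, ha]
    abel
  have hinv2 : ∀ f : b ⟶ k, (𝟙 y - p ≫ f ≫ i) ≫ (𝟙 y + p ≫ f ≫ i) = 𝟙 y := by
    intro f
    simp only [Preadditive.comp_add, Preadditive.comp_sub, Preadditive.add_comp, Preadditive.sub_comp, Category.comp_id, Category.id_comp, ha]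
    abel
  have hmem : ∀ f : b ⟶ k,
      (⟨𝟙 y + p ≫ f ≫ i, 𝟙 y - p ≫ f ≫ i, hinv1 f, hinv2 f⟩ : Aut y) ∈
        stabilizer (Aut y) (⟨(i, p), h1, h2, w, hex⟩ : Vset k y b) := by
    intro f
    show _ • _ = _
    apply Subtype.ext
    refine (smul_coe _ _).trans ?_
    refine Prod.ext ?_ ?_
    · show i ≫ (𝟙 y + p ≫ f ≫ i) = i
      rw [Preadditive.comp_add, Category.comp_id, ← Category.assoc, w]
      simp
    · show (𝟙 y - p ≫ f ≫ i) ≫ p = p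
      rw [Preadditive.sub_comp, Category.id_comp, Category.assoc, Category.assoc, w]
      simp
  refine (Nat.card_congr (Equiv.ofBijective
    (fun f : b ⟶ k => ⟨⟨𝟙 y + p ≫ f ≫ i, 𝟙 y - p ≫ f ≫ i, hinv1 f, hinv2 f⟩, hmem f⟩)
    ⟨?_, ?_⟩)).symm
  · intro f g hfg
    have h0 := congrArg (fun φ : stabilizer (Aut y)
      (⟨(i, p), h1, h2, w, hex⟩ : Vset k y b) => (φ : Aut y).hom) hfg
    simp only at h0
    have h' : p ≫ f ≫ i = p ≫ g ≫ i := add_left_cancel h0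
    rw [← cancel_epi p, ← cancel_mono i]
    simpa using h'
  · rintro ⟨φ, hφ⟩
    rw [mem_stabilizer_iff] at hφ
    have hφ' := congrArg Subtype.val hφ
    rw [smul_coe] at hφ'
    have hi : i ≫ φ.hom = i := congrArg Prod.fst hφ'
    have hp : φ.inv ≫ p = p := congrArg Prod.snd hφ'
    have hp' : φ.hom ≫ p = p := by
      simpa [Iso.hom_inv_id_assoc (φ : y ≅ y)] using (congrArg (fun q => φ.hom ≫ q) hp).symm
    have hzero : i ≫ (φ.hom - 𝟙 y) = 0 := by
      rw [Preadditive.comp_sub, hi, Category.comp_id, sub_self]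
    haveI hS2 : Epi (ShortComplex.mk i p w).g := h2
    haveI hS1 : Mono (ShortComplex.mk i p w).f := h1
    obtain ⟨g, hg⟩ := hex.desc' (φ.hom - 𝟙 y) hzero
    change p ≫ g = _ at hg
    have hgp : g ≫ p = 0 := by
      rw [← cancel_epi p, ← Category.assoc, hg, Preadditive.sub_comp, hp', Category.id_comp, sub_self,
        comp_zero]
    obtain ⟨f, hf⟩ := hex.lift' g hgp
    change f ≫ i = g at hf
    refine ⟨f, ?_⟩
    apply Subtype.ext
    apply Iso.ext
    show 𝟙 y + p ≫ f ≫ i = φ.hom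
    rw [show p ≫ f ≫ i = p ≫ g by rw [← hf], hg]
    abel

lemma finite_aut (y : C) [Finite (y ⟶ y)] : Finite (Aut y) :=
  Finite.of_injective (fun φ : Aut y => (φ.hom, φ.inv))
    (fun φ ψ h => Iso.ext (congrArg Prod.fst h))

theorem main (k y b : C) [Finite (k ⟶ y)] [Finite (y ⟶ b)] [Finite (b ⟶ k)]
    [Finite (y ⟶ y)] :
    (Nat.card (Quot (fun v v' : Vset k y b => ∃ φ : Aut y,
        (v' : (k ⟶ y) × (y ⟶ b)).1 = (v : (k ⟶ y) × (y ⟶ b)).1 ≫ φ.hom ∧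
        (v' : (k ⟶ y) × (y ⟶ b)).2 = φ.inv ≫ (v : (k ⟶ y) × (y ⟶ b)).2)) : ℚ) =
      (Nat.card (Vset k y b) : ℚ) * (Nat.card (b ⟶ k) : ℚ) / (Nat.card (Aut y) : ℚ) := by
  haveI : Finite (Aut y) := finite_aut y
  have hrel : (fun v v' : Vset k y b => ∃ φ : Aut y,
      (v' : (k ⟶ y) × (y ⟶ b)).1 = (v : (k ⟶ y) × (y ⟶ b)).1 ≫ φ.hom ∧
      (v' : (k ⟶ y) × (y ⟶ b)).2 = φ.inv ≫ (v : (k ⟶ y) × (y ⟶ b)).2) =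
      (orbitRel (Aut y) (Vset k y b)).r := by
    funext v v'
    apply propext
    constructor
    · rintro ⟨φ, hA, hB⟩
      refine ⟨φ⁻¹, Subtype.ext (Prod.ext ?_ ?_)⟩
      · show (v' : (k ⟶ y) × (y ⟶ b)).1 ≫ φ.inv = (v : (k ⟶ y) × (y ⟶ b)).1
        rw [hA, Category.assoc, φ.hom_inv_id, Category.comp_id]
      · show φ.hom ≫ (v' : (k ⟶ y) × (y ⟶ b)).2 = (v : (k ⟶ y) × (y ⟶ b)).2
        rw [hB, φ.hom_inv_id_assoc]
    · rintro ⟨φ, hφ⟩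
      have h := congrArg Subtype.val hφ
      rw [smul_coe] at h
      have hA : (v' : (k ⟶ y) × (y ⟶ b)).1 ≫ φ.hom = (v : (k ⟶ y) × (y ⟶ b)).1 :=
        congrArg Prod.fst h
      have hB : φ.inv ≫ (v' : (k ⟶ y) × (y ⟶ b)).2 = (v : (k ⟶ y) × (y ⟶ b)).2 :=
        congrArg Prod.snd h
      refine ⟨φ⁻¹, ?_, ?_⟩
      · show _ = (v : (k ⟶ y) × (y ⟶ b)).1 ≫ φ.inv
        rw [← hA, Category.assoc, φ.hom_inv_id, Category.comp_id]
      · show _ = φ.hom ≫ (v : (k ⟶ y) × (y ⟶ b)).2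
        rw [← hB, φ.hom_inv_id_assoc]
  have ecast : Quot (fun v v' : Vset k y b => ∃ φ : Aut y,
      (v' : (k ⟶ y) × (y ⟶ b)).1 = (v : (k ⟶ y) × (y ⟶ b)).1 ≫ φ.hom ∧
      (v' : (k ⟶ y) × (y ⟶ b)).2 = φ.inv ≫ (v : (k ⟶ y) × (y ⟶ b)).2) =
      Quotient (orbitRel (Aut y) (Vset k y b)) := by
    rw [hrel]
    rfl
  have key := counting (G := Aut y) (X := Vset k y b) (Nat.card (b ⟶ k))
    (fun v => card_stabilizer v)
  have hG : (Nat.card (Aut y) : ℚ) ≠ 0 := by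
    have : 0 < Nat.card (Aut y) := Nat.card_pos
    exact_mod_cast this.ne'
  rw [eq_div_iff hG, Nat.card_congr (Equiv.cast ecast)]
  exact_mod_cast key.symm

end Statement9Aux

open CategoryTheory

/-- Let `V(k, y, b)` be the set of pairs `(i, p)` forming a short exact sequence
`0 → k →ⁱ y →ᵖ b → 0` in an abelian category with the indicated finiteness properties.
`Aut(y)` acts on `V(k, y, b)` by `φ · (i, p) = (φ ∘ i, p ∘ φ⁻¹)`; the number of orbits
equals `|V(k, y, b)| · |Hom(b, k)| / |Aut(y)|` in `ℚ`. -/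
theorem statement9 {C : Type*} [Category C] [Abelian C] (k y b : C)
    [Finite (k ⟶ y)] [Finite (y ⟶ b)] [Finite (b ⟶ k)] [Finite (y ⟶ y)]
    (V : Set ((k ⟶ y) × (y ⟶ b)))
    (hV : V = {ip | Mono ip.1 ∧ Epi ip.2 ∧
      ∃ w : ip.1 ≫ ip.2 = 0, (ShortComplex.mk ip.1 ip.2 w).Exact}) :
    (Nat.card (Quot (fun v v' : V => ∃ φ : Aut y,
        (v' : (k ⟶ y) × (y ⟶ b)).1 = (v : (k ⟶ y) × (y ⟶ b)).1 ≫ φ.hom ∧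
        (v' : (k ⟶ y) × (y ⟶ b)).2 = φ.inv ≫ (v : (k ⟶ y) × (y ⟶ b)).2)) : ℚ) =
      (Nat.card V : ℚ) * (Nat.card (b ⟶ k) : ℚ) / (Nat.card (Aut y) : ℚ) := by
  subst hV
  exact Statement9Aux.main k y b
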